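/- Assume D_pH : [0,T]×cl(Ω)×ℝⁿ×𝔐(cl(Ω)×ℝⁿ) → ℝⁿ is continuous, where 𝔐_{∞,R}(cl(Ω)×ℝⁿ) carries the metric d* for each R > 0, and satisfies: (i) the contraction property |D_pH(t,x,p,(I,α₁)#ρ) − D_pH(t,x,p,(I,α₂)#ρ)| ≤ L₁‖α₁−α₂‖_{L^{q₀}(ρ)} for some L₁ ∈ (0,1), q₀ ∈ [1,∞), all subprobability measures ρ on cl(Ω) and bounded continuous α₁,α₂; (ii) the growth bound |D_pH(t,x,p,μ)| ≤ C₀(1+|p|^{q−1}) + λ₀Λ_{q₀}(μ) with C₀ > 0, q ∈ (1,∞), λ₀ ∈ (0,1). Let (t_k, λ_k, p_k, m_k) be a sequence in [0,T]×[0,1]×C⁰(cl(Ω);ℝⁿ)×L¹(Ω) with t_k → t, λ_k → λ, p_k → p uniformly, m_k ≥ 0, ‖m_k‖_{L¹(Ω)} ≤ 1, and m_k → m in L¹(Ω). Let μ^k and μ be the unique fixed points μ^k = (I, −λ_k D_pH(t_k,·,p_k(·),μ^k))#(m_k dx) and μ = (I, −λ D_pH(t,·,p(·),μ))#(m dx).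 Then d*(μ^k, μ) → 0. -/

import Mathlib

open Set MeasureTheory Filter
open scoped RealInnerProductSpace ENNReal Topology

noncomputable section

namespace MFG

/-- Euclidean space `ℝⁿ`. -/
abbrev Euc (n : ℕ) := EuclideanSpace ℝ (Fin n)

variable {n : ℕ}

/-- The pushforward `(I,α)#m` of a measure `m` under `x ↦ (x, α x)`. -/
def pushfwd (m : Measure (Euc n)) (α : Euc n → Euc n) : Measure (Euc n × Euc n) :=
  Measure.map (fun x => (x, α x)) m

/-- `Λ_q(μ) = (∫ |α|^q dμ(x,α))^{1/q}`. -/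
def LambdaQ (q : ℝ) (μ : Measure (Euc n × Euc n)) : ℝ :=
  (∫ z, ‖z.2‖ ^ q ∂μ) ^ (1 / q)

/-- `Λ_∞(μ)`: the smallest `R ≥ 0` such that `μ` is supported in `{|α| ≤ R}`. -/
def LambdaInf (μ : Measure (Euc n × Euc n)) : ℝ :=
  sInf {R : ℝ | 0 ≤ R ∧ μ {z : Euc n × Euc n | R < ‖z.2‖} = 0}

/-- `L^q(ρ)` norm of a vector field. -/
def LqNormV (q : ℝ) (ρ : Measure (Euc n)) (f : Euc n → Euc n) : ℝ :=
  (∫ x, ‖f x‖ ^ q ∂ρ) ^ (1 / q)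

/-- `L^q(ρ)` norm of a scalar function. -/
def LqNormR (q : ℝ) (ρ : Measure (Euc n)) (f : Euc n → ℝ) : ℝ :=
  (∫ x, |f x| ^ q ∂ρ) ^ (1 / q)

/-- The bounded-Lipschitz metric `d*` on measures on `cl(Ω) × ℝⁿ`. -/
def dstar (μ ν : Measure (Euc n × Euc n)) : ℝ :=
  sSup {r : ℝ | ∃ φ : Euc n × Euc n → ℝ, LipschitzWith 1 φ ∧ (∀ z, |φ z| ≤ 1) ∧
    r = (∫ z, φ z ∂μ) - ∫ z, φ z ∂ν}

/-- The bounded-Lipschitz metric `d*` on measures on `cl(Ω)`. -/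
def dstarX (μ ν : Measure (Euc n)) : ℝ :=
  sSup {r : ℝ | ∃ φ : Euc n → ℝ, LipschitzWith 1 φ ∧ (∀ z, |φ z| ≤ 1) ∧
    r = (∫ z, φ z ∂μ) - ∫ z, φ z ∂ν}

/-- The measure `f dx` on `Ω` with Lebesgue density `f`. -/
def densMeas (Ω : Set (Euc n)) (f : Euc n → ℝ) : Measure (Euc n) :=
  (volume.restrict Ω).withDensity fun x => ENNReal.ofReal (f x)

/-- `∂_t u`. -/
def pderivT (u : ℝ → Euc n → ℝ) (t : ℝ) (x : Euc n) : ℝ :=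
  deriv (fun s => u s x) t

/-- `D_x u`, the spatial gradient. -/
def spaceGrad (u : ℝ → Euc n → ℝ) (t : ℝ) (x : Euc n) : Euc n :=
  gradient (u t) x

/-- The Laplacian of a function on `ℝⁿ`. -/
def lapl (f : Euc n → ℝ) (x : Euc n) : ℝ :=
  ∑ i : Fin n, fderiv ℝ (fun y => fderiv ℝ f y (EuclideanSpace.single i 1)) x
    (EuclideanSpace.single i 1)

/-- The (spatial) divergence of a vector field on `ℝⁿ`. -/
def divg (F : Euc n → Euc n) (x : Euc n) : ℝ :=
  ∑ i : Fin n, fderiv ℝ (fun y => F y i) x (EuclideanSpace.single i 1)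

/-- `u ∈ C^{1,2}(Q)`: continuous on `Q = [0,T] × cl(Ω)`, once differentiable in time,
twice in space. -/
def C12 (T : ℝ) (Ω : Set (Euc n)) (u : ℝ → Euc n → ℝ) : Prop :=
  ContinuousOn (fun z : ℝ × Euc n => u z.1 z.2) (Icc 0 T ×ˢ closure Ω) ∧
  ∀ t ∈ Icc (0:ℝ) T, ∀ x ∈ closure Ω,
    DifferentiableAt ℝ (fun s => u s x) t ∧ ContDiffAt ℝ 2 (u t) x

/-- `sup_Q v`. -/
def supQ (T : ℝ) (Ω : Set (Euc n)) (v : ℝ → Euc n → ℝ) : ℝ :=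
  sSup ((fun z : ℝ × Euc n => v z.1 z.2) '' (Icc 0 T ×ˢ closure Ω))

/-- `sup_{cl Ω} v`. -/
def supX (Ω : Set (Euc n)) (v : Euc n → ℝ) : ℝ :=
  sSup (v '' closure Ω)

/-- `N` is the outward unit normal vector field on `∂Ω`. -/
def OutwardNormal (Ω : Set (Euc n)) (N : Euc n → Euc n) : Prop :=
  ∀ x ∈ frontier Ω, ‖N x‖ = 1 ∧
    ∀ᶠ s : ℝ in 𝓝[>] (0:ℝ), x + s • N x ∉ closure Ω ∧ x - s • N x ∈ Ω

/-- `Θ_θ(μ)`: pushforward of `μ` under `(x,α) ↦ (x, α/θ)`. -/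
def Theta (θ : ℝ) (μ : Measure (Euc n × Euc n)) : Measure (Euc n × Euc n) :=
  Measure.map (fun z : Euc n × Euc n => (z.1, θ⁻¹ • z.2)) μ

/-- `L^θ(t,x,α,μ) = θ L(t,x,α/θ,Θ_θ(μ))`. -/
def Ltheta (L : ℝ → Euc n → Euc n → Measure (Euc n × Euc n) → ℝ)
    (θ t : ℝ) (x a : Euc n) (μ : Measure (Euc n × Euc n)) : ℝ :=
  θ * L t x (θ⁻¹ • a) (Theta θ μ)

/-- `H^θ`, the Legendre transform of `L^θ` in the velocity variable. -/
def Htheta (L : ℝ → Euc n → Euc n → Measure (Euc n × Euc n) → ℝ)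
    (θ t : ℝ) (x p : Euc n) (μ : Measure (Euc n × Euc n)) : ℝ :=
  ⨆ a : Euc n, (⟪p, a⟫ - Ltheta L θ t x a μ)

/-- Sequential continuity on `[0,T] × cl(Ω) × ℝⁿ × 𝔐_{∞,R}(cl(Ω)×ℝⁿ)` (every `R`),
the measure argument carrying the metric `d*` (scalar-valued version). -/
def MContR (T : ℝ) (Ω : Set (Euc n))
    (F : ℝ → Euc n → Euc n → Measure (Euc n × Euc n) → ℝ) : Prop :=
  ∀ R > (0:ℝ), ∀ (tk : ℕ → ℝ) (xk pk : ℕ → Euc n)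
    (μk : ℕ → Measure (Euc n × Euc n)) (t : ℝ) (x p : Euc n)
    (μ : Measure (Euc n × Euc n)),
    (∀ k, tk k ∈ Icc 0 T) → t ∈ Icc 0 T →
    (∀ k, xk k ∈ closure Ω) → x ∈ closure Ω →
    (∀ k, μk k Set.univ ≤ 1 ∧ μk k {z : Euc n × Euc n | R < ‖z.2‖} = 0) →
    μ Set.univ ≤ 1 → μ {z : Euc n × Euc n | R < ‖z.2‖} = 0 →
    Tendsto tk atTop (𝓝 t) → Tendsto xk atTop (𝓝 x) → Tendsto pk atTop (𝓝 p) →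
    Tendsto (fun k => dstar (μk k) μ) atTop (𝓝 0) →
    Tendsto (fun k => F (tk k) (xk k) (pk k) (μk k)) atTop (𝓝 (F t x p μ))

/-- Sequential continuity (vector-valued version). -/
def MContV (T : ℝ) (Ω : Set (Euc n))
    (F : ℝ → Euc n → Euc n → Measure (Euc n × Euc n) → Euc n) : Prop :=
  ∀ R > (0:ℝ), ∀ (tk : ℕ → ℝ) (xk pk : ℕ → Euc n)
    (μk : ℕ → Measure (Euc n × Euc n)) (t : ℝ) (x p : Euc n)
    (μ : Measure (Euc n × Euc n)),
    (∀ k, tk k ∈ Icc 0 T) → t ∈ Icc 0 T →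
    (∀ k, xk k ∈ closure Ω) → x ∈ closure Ω →
    (∀ k, μk k Set.univ ≤ 1 ∧ μk k {z : Euc n × Euc n | R < ‖z.2‖} = 0) →
    μ Set.univ ≤ 1 → μ {z : Euc n × Euc n | R < ‖z.2‖} = 0 →
    Tendsto tk atTop (𝓝 t) → Tendsto xk atTop (𝓝 x) → Tendsto pk atTop (𝓝 p) →
    Tendsto (fun k => dstar (μk k) μ) atTop (𝓝 0) →
    Tendsto (fun k => F (tk k) (xk k) (pk k) (μk k)) atTop (𝓝 (F t x p μ))

end MFG

open MFG

section Helpers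
variable {n : ℕ} {Ω : Set (Euc n)} {m' : Euc n → ℝ}

lemma seqContOn {E : Type*} [PseudoMetricSpace E] {f : Euc n → E} {s : Set (Euc n)}
    (h : ∀ u : ℕ → Euc n, (∀ j, u j ∈ s) → ∀ x ∈ s, Tendsto u atTop (𝓝 x) →
      Tendsto (fun j => f (u j)) atTop (𝓝 (f x))) : ContinuousOn f s := by
  rw [continuousOn_iff_continuous_restrict]
  refine SeqContinuous.continuous ?_
  intro u x hu
  exact h (fun j => (u j : Euc n)) (fun j => (u j).2) x.1 x.2
    ((continuous_subtype_val.tendsto x).comp hu)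

lemma abs_int_le {X : Type*} [MeasurableSpace X] (μ : Measure X) (f : X → ℝ) :
    |∫ x, f x ∂μ| ≤ ∫ x, |f x| ∂μ := by
  simpa [Real.norm_eq_abs] using norm_integral_le_integral_norm (μ := μ) f

lemma dstar_self (μ : Measure (Euc n × Euc n)) : dstar μ μ = 0 := by
  have hset : {r : ℝ | ∃ φ : Euc n × Euc n → ℝ, LipschitzWith 1 φ ∧ (∀ z, |φ z| ≤ 1) ∧
      r = (∫ z, φ z ∂μ) - ∫ z, φ z ∂μ} = {0} := by
    ext r
    simp only [mem_setOf_eq, mem_singleton_iff]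
    constructor
    · rintro ⟨φ, -, -, rfl⟩; exact sub_self _
    · rintro rfl
      exact ⟨fun _ => 0, (LipschitzWith.const 0).weaken zero_le_one,
        fun z => by norm_num, by simp⟩
  rw [dstar, hset, csSup_singleton]

lemma dstar_le {μ ν : Measure (Euc n × Euc n)} {a : ℝ} (ha : 0 ≤ a)
    (h : ∀ φ : Euc n × Euc n → ℝ, LipschitzWith 1 φ → (∀ z, |φ z| ≤ 1) →
      (∫ z, φ z ∂μ) - ∫ z, φ z ∂ν ≤ a) : dstar μ ν ≤ a :=
  Real.sSup_le (by rintro r ⟨φ, h1, h2, rfl⟩; exact h φ h1 h2) ha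

lemma dstar_nonneg {μ ν : Measure (Euc n × Euc n)} {a : ℝ}
    (h : ∀ φ : Euc n × Euc n → ℝ, LipschitzWith 1 φ → (∀ z, |φ z| ≤ 1) →
      (∫ z, φ z ∂μ) - ∫ z, φ z ∂ν ≤ a) : 0 ≤ dstar μ ν := by
  refine le_csSup ⟨a, ?_⟩ ?_
  · rintro r ⟨φ, h1, h2, rfl⟩; exact h φ h1 h2
  · exact ⟨fun _ => 0, (LipschitzWith.const 0).weaken zero_le_one, fun z => by norm_num, by simp⟩

variable {Ω : Set (Euc n)} {m' : Euc n → ℝ}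

lemma densMeas_ac : densMeas Ω m' ≪ volume.restrict Ω := withDensity_absolutelyContinuous _ _

lemma densMeas_univ_le (hm'0 : ∀ x, 0 ≤ m' x) (hint : IntegrableOn m' Ω)
    (h1 : (∫ x in Ω, m' x) ≤ 1) : densMeas Ω m' Set.univ ≤ 1 := by
  rw [densMeas, withDensity_apply _ MeasurableSet.univ, Measure.restrict_univ,
    ← ofReal_integral_eq_lintegral_ofReal hint (Filter.Eventually.of_forall hm'0)]
  exact ENNReal.ofReal_le_one.mpr h1

lemma densMeas_ae_mem (hΩ : MeasurableSet Ω) : ∀ᵐ x ∂densMeas Ω m', x ∈ Ω :=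
  densMeas_ac.ae_le (ae_restrict_mem hΩ)

lemma densMeas_compl : densMeas Ω m' ((closure Ω)ᶜ) = 0 := by
  refine densMeas_ac ?_
  rw [Measure.restrict_apply isClosed_closure.measurableSet.compl]
  have : (closure Ω)ᶜ ∩ Ω = ∅ := by
    ext x; simp only [mem_inter_iff, mem_compl_iff, mem_empty_iff_false, iff_false, not_and]
    intro h1 h2; exact h1 (subset_closure h2)
  rw [this, measure_empty]

lemma densMeas_finite (hm'0 : ∀ x, 0 ≤ m' x) (hint : IntegrableOn m' Ω)
    (h1 : (∫ x in Ω, m' x) ≤ 1) : IsFiniteMeasure (densMeas Ω m') :=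
  ⟨lt_of_le_of_lt (densMeas_univ_le hm'0 hint h1) ENNReal.one_lt_top⟩

lemma densMeas_toReal_le (hm'0 : ∀ x, 0 ≤ m' x) (hint : IntegrableOn m' Ω)
    (h1 : (∫ x in Ω, m' x) ≤ 1) : (densMeas Ω m' Set.univ).toReal ≤ 1 := by
  have := ENNReal.toReal_mono ENNReal.one_ne_top (densMeas_univ_le hm'0 hint h1)
  simpa using this

lemma densMeas_integral {E : Type*} [NormedAddCommGroup E] [NormedSpace ℝ E]
    (hm'0 : ∀ x, 0 ≤ m' x) (hmeas : AEStronglyMeasurable m' (volume.restrict Ω))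
    (g : Euc n → E) :
    ∫ x, g x ∂densMeas Ω m' = ∫ x in Ω, m' x • g x := by
  have hm : AEMeasurable (fun x => (m' x).toNNReal) (volume.restrict Ω) :=
    measurable_real_toNNReal.comp_aemeasurable hmeas.aemeasurable
  rw [densMeas]
  have heq : (fun x => ENNReal.ofReal (m' x)) = fun x => ((m' x).toNNReal : ℝ≥0∞) := rfl
  rw [heq, integral_withDensity_eq_integral_smul₀ hm g]
  refine integral_congr_ae (Filter.Eventually.of_forall fun x => ?_)
  show (m' x).toNNReal • g x = m' x • g x
  rw [NNReal.smul_def, Real.coe_toNNReal _ (hm'0 x)]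

lemma aesm_densMeas {E : Type*} [NormedAddCommGroup E] (hΩo : IsOpen Ω) {f : Euc n → E}
    (hf : ContinuousOn f (closure Ω)) : AEStronglyMeasurable f (densMeas Ω m') :=
  ((hf.mono subset_closure).aestronglyMeasurable hΩo.measurableSet).mono_ac densMeas_ac

lemma integrable_densMeas {E : Type*} [NormedAddCommGroup E] (hΩo : IsOpen Ω)
    (hm'0 : ∀ x, 0 ≤ m' x) (hint : IntegrableOn m' Ω) (h1 : (∫ x in Ω, m' x) ≤ 1)
    {f : Euc n → E} (hmeas : AEStronglyMeasurable f (densMeas Ω m')) {c : ℝ}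
    (hc : ∀ x ∈ closure Ω, ‖f x‖ ≤ c) : Integrable f (densMeas Ω m') := by
  haveI := densMeas_finite hm'0 hint h1
  refine (integrable_const c).mono' hmeas ?_
  filter_upwards [densMeas_ae_mem hΩo.measurableSet] with x hx using hc x (subset_closure hx)

lemma densMeas_integral_le (hΩo : IsOpen Ω) (hm'0 : ∀ x, 0 ≤ m' x)
    (hint : IntegrableOn m' Ω) (h1 : (∫ x in Ω, m' x) ≤ 1) {f : Euc n → ℝ} {c : ℝ}
    (hc0 : 0 ≤ c) (hf0 : ∀ x, 0 ≤ f x) (hc : ∀ x ∈ closure Ω, f x ≤ c) :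
    (∫ x, f x ∂densMeas Ω m') ≤ c := by
  haveI := densMeas_finite hm'0 hint h1
  calc ∫ x, f x ∂densMeas Ω m'
      ≤ ∫ _, c ∂densMeas Ω m' := integral_mono_of_nonneg (.of_forall hf0) (integrable_const c)
        (by filter_upwards [densMeas_ae_mem hΩo.measurableSet] with x hx using hc x (subset_closure hx))
    _ = (densMeas Ω m' Set.univ).toReal • c := integral_const c
    _ ≤ c := by
        rw [smul_eq_mul]
        exact mul_le_of_le_one_left hc0 (densMeas_toReal_le hm'0 hint h1)

lemma cont_DpH {T : ℝ} {Ω : Set (Euc n)}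
    {DpH : ℝ → Euc n → Euc n → Measure (Euc n × Euc n) → Euc n}
    (hDcont : MContV T Ω DpH) {s : ℝ} (hs : s ∈ Icc 0 T) {p' : Euc n → Euc n}
    (hp'c : ContinuousOn p' (closure Ω)) {μ'' : Measure (Euc n × Euc n)}
    (h1 : μ'' Set.univ ≤ 1) {R : ℝ} (hR : 0 < R)
    (h2 : μ'' {z : Euc n × Euc n | R < ‖z.2‖} = 0) :
    ContinuousOn (fun x => DpH s x (p' x) μ'') (closure Ω) := by
  apply seqContOn
  intro u hu x hx hux
  have hpu : Tendsto (fun j => p' (u j)) atTop (𝓝 (p' x)) :=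
    (hp'c x hx).tendsto.comp (tendsto_nhdsWithin_iff.mpr ⟨hux, .of_forall hu⟩)
  have hds : Tendsto (fun _ : ℕ => dstar μ'' μ'') atTop (𝓝 0) := by
    rw [dstar_self]; exact tendsto_const_nhds
  exact hDcont R hR (fun _ => s) u (fun j => p' (u j)) (fun _ => μ'') s x (p' x) μ''
    (fun _ => hs) hs hu hx (fun _ => ⟨h1, h2⟩) h1 h2 tendsto_const_nhds hux hpu hds

lemma pushfwd_props (hΩo : IsOpen Ω) {α' : Euc n → Euc n}
    (hαc : ContinuousOn α' (closure Ω)) {R : ℝ} (hb : ∀ x ∈ closure Ω, ‖α' x‖ ≤ R) :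
    AEMeasurable (fun x => (x, α' x)) (densMeas Ω m') ∧
    pushfwd (densMeas Ω m') α' Set.univ = densMeas Ω m' Set.univ ∧
    pushfwd (densMeas Ω m') α' {z : Euc n × Euc n | R < ‖z.2‖} = 0 := by
  have hαm : AEMeasurable α' (densMeas Ω m') :=
    ((hαc.mono subset_closure).aemeasurable hΩo.measurableSet).mono_ac densMeas_ac
  have hF : AEMeasurable (fun x => (x, α' x)) (densMeas Ω m') := aemeasurable_id.prodMk hαm
  refine ⟨hF, ?_, ?_⟩
  · rw [pushfwd, Measure.map_apply_of_aemeasurable hF MeasurableSet.univ, preimage_univ]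
  · rw [pushfwd, Measure.map_apply_of_aemeasurable hF
      ((isOpen_lt continuous_const continuous_snd.norm).measurableSet)]
    refine measure_eq_zero_iff_ae_notMem.mpr ?_
    filter_upwards [densMeas_ae_mem hΩo.measurableSet] with x hx
    simp only [mem_preimage, mem_setOf_eq, not_lt]
    exact hb x (subset_closure hx)

lemma fp_props {T : ℝ} {Ω : Set (Euc n)} (hΩo : IsOpen Ω)
    {DpH : ℝ → Euc n → Euc n → Measure (Euc n × Euc n) → Euc n}
    {C₀ q lam₀ q₀ : ℝ} (hC₀ : 0 < C₀) (hq : 1 < q) (hlam₀ : lam₀ ∈ Ioo (0:ℝ) 1)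
    (hq₀ : 1 ≤ q₀) (hDcont : MContV T Ω DpH)
    (hgrowth : ∀ s ∈ Icc (0:ℝ) T, ∀ x ∈ closure Ω, ∀ (pp : Euc n)
      (μ' : Measure (Euc n × Euc n)), μ' Set.univ ≤ 1 →
      ‖DpH s x pp μ'‖ ≤ C₀ * (1 + ‖pp‖ ^ (q - 1)) + lam₀ * LambdaQ q₀ μ')
    {s lam' : ℝ} (hs : s ∈ Icc 0 T) (hlam' : lam' ∈ Icc (0:ℝ) 1)
    {p' : Euc n → Euc n} (hp'c : ContinuousOn p' (closure Ω))
    {P : ℝ} (hP0 : 0 ≤ P) (hp'b : ∀ x ∈ closure Ω, ‖p' x‖ ≤ P)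
    {m' : Euc n → ℝ} (hm'0 : ∀ x, 0 ≤ m' x) (hm'int : IntegrableOn m' Ω)
    (hm'1 : (∫ x in Ω, m' x) ≤ 1)
    {μ' : Measure (Euc n × Euc n)}
    (hfix : μ' = pushfwd (densMeas Ω m') fun x => -(lam' • DpH s x (p' x) μ')) :
    μ' Set.univ ≤ 1 ∧
    μ' {z : Euc n × Euc n | C₀ * (1 + P ^ (q - 1)) / (1 - lam₀) < ‖z.2‖} = 0 ∧
    ContinuousOn (fun x => -(lam' • DpH s x (p' x) μ')) (closure Ω) ∧
    ∀ x ∈ closure Ω, ‖-(lam' • DpH s x (p' x) μ')‖ ≤ C₀ * (1 + P ^ (q - 1)) / (1 - lam₀) := by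
  have hq₀0 : (0:ℝ) < q₀ := lt_of_lt_of_le one_pos hq₀
  have h1l : 0 < 1 - lam₀ := by have := hlam₀.2; linarith
  set M : ℝ := C₀ * (1 + P ^ (q - 1)) with hM
  have hMpos : 0 < M := by rw [hM]; positivity
  set R : ℝ := M / (1 - lam₀) with hR
  have hRpos : 0 < R := div_pos hMpos h1l
  set ν := densMeas Ω m' with hν
  haveI : IsFiniteMeasure ν := densMeas_finite hm'0 hm'int hm'1
  have hν1 : ν Set.univ ≤ 1 := densMeas_univ_le hm'0 hm'int hm'1
  set α' : Euc n → Euc n := fun x => -(lam' • DpH s x (p' x) μ') with hα'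
  have hFmeas : AEMeasurable (fun x => (x, α' x)) ν := by
    by_contra hF
    have hμ0 : μ' = 0 := by rw [hfix, pushfwd, Measure.map_of_not_aemeasurable hF]
    have hcont : ContinuousOn (fun x => DpH s x (p' x) μ') (closure Ω) :=
      cont_DpH hDcont hs hp'c (by rw [hμ0]; simp) one_pos (by rw [hμ0]; simp)
    exact hF (aemeasurable_id.prodMk
      ((((hcont.const_smul lam').neg.mono subset_closure).aemeasurable
        hΩo.measurableSet).mono_ac densMeas_ac))
  have hmass : μ' Set.univ ≤ 1 := by
    rw [hfix, pushfwd, Measure.map_apply_of_aemeasurable hFmeas MeasurableSet.univ,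
      preimage_univ]
    exact hν1
  have hΛ0 : 0 ≤ LambdaQ q₀ μ' :=
    Real.rpow_nonneg (integral_nonneg fun z => Real.rpow_nonneg (norm_nonneg _) _) _
  set Λ := LambdaQ q₀ μ' with hΛ
  set c' : ℝ := M + lam₀ * Λ with hc'
  have hc'0 : 0 ≤ c' := add_nonneg hMpos.le (mul_nonneg hlam₀.1.le hΛ0)
  have hptle : ∀ x ∈ closure Ω, ‖α' x‖ ≤ c' := by
    intro x hx
    have h1 := hgrowth s hs x hx (p' x) μ' hmass
    have h2 : ‖p' x‖ ^ (q - 1) ≤ P ^ (q - 1) :=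
      Real.rpow_le_rpow (norm_nonneg _) (hp'b x hx) (by linarith)
    have h3 : ‖α' x‖ = lam' * ‖DpH s x (p' x) μ'‖ := by
      rw [hα']; simp only [norm_neg, norm_smul, Real.norm_of_nonneg hlam'.1]
    rw [h3]
    have h4 : lam' * ‖DpH s x (p' x) μ'‖ ≤ ‖DpH s x (p' x) μ'‖ := by
      nlinarith [norm_nonneg (DpH s x (p' x) μ'), hlam'.2]
    have h5 : C₀ * (1 + ‖p' x‖ ^ (q - 1)) ≤ M := by rw [hM]; nlinarith
    calc lam' * ‖DpH s x (p' x) μ'‖ ≤ ‖DpH s x (p' x) μ'‖ := h4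
      _ ≤ C₀ * (1 + ‖p' x‖ ^ (q - 1)) + lam₀ * Λ := h1
      _ ≤ c' := by rw [hc']; linarith
  have hIeq : (∫ z, ‖z.2‖ ^ q₀ ∂μ') = ∫ x, ‖α' x‖ ^ q₀ ∂ν := by
    conv_lhs => rw [hfix, pushfwd]
    refine integral_map hFmeas ?_
    rw [← pushfwd, ← hfix]
    exact (continuous_snd.norm.rpow_const fun z => Or.inr hq₀0.le).aestronglyMeasurable
  have hI : (∫ z, ‖z.2‖ ^ q₀ ∂μ') ≤ c' ^ q₀ := by
    rw [hIeq]
    exact densMeas_integral_le hΩo hm'0 hm'int hm'1 (Real.rpow_nonneg hc'0 _)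
      (fun x => Real.rpow_nonneg (norm_nonneg _) _)
      (fun x hx => Real.rpow_le_rpow (norm_nonneg _) (hptle x hx) hq₀0.le)
  have hΛle : Λ ≤ c' := by
    have h4 : Λ ≤ (c' ^ q₀) ^ (1 / q₀) := by
      rw [hΛ, LambdaQ]
      exact Real.rpow_le_rpow
        (integral_nonneg fun z => Real.rpow_nonneg (norm_nonneg _) _) hI (by positivity)
    rwa [← Real.rpow_mul hc'0, mul_one_div_cancel (ne_of_gt hq₀0), Real.rpow_one] at h4
  have hΛR : Λ ≤ R := by
    rw [hR, le_div_iff₀ h1l]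
    nlinarith [hΛle]
  have hc'R : c' ≤ R := by
    have hRe : M + lam₀ * R = R := by rw [hR]; field_simp; ring
    have : lam₀ * Λ ≤ lam₀ * R := mul_le_mul_of_nonneg_left hΛR hlam₀.1.le
    rw [hc']; linarith
  have hbd : ∀ x ∈ closure Ω, ‖α' x‖ ≤ R := fun x hx => (hptle x hx).trans hc'R
  have hsupp : μ' {z : Euc n × Euc n | R < ‖z.2‖} = 0 := by
    rw [hfix, pushfwd, Measure.map_apply_of_aemeasurable hFmeas
      ((isOpen_lt continuous_const continuous_snd.norm).measurableSet)]
    refine measure_eq_zero_iff_ae_notMem.mpr ?_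
    filter_upwards [densMeas_ae_mem hΩo.measurableSet] with x hx
    simp only [mem_preimage, mem_setOf_eq, not_lt]
    exact hbd x (subset_closure hx)
  have hcont : ContinuousOn α' (closure Ω) :=
    ((cont_DpH hDcont hs hp'c hmass hRpos hsupp).const_smul lam').neg
  exact ⟨hmass, hsupp, hcont, hbd⟩

end Helpers

/-- stability of the fixed-point measures `μ^k` under convergence of
the data `(t_k, λ_k, p_k, m_k) → (t, λ, p, m)`. -/
theorem stmt_2
    {n : ℕ} (hn : 1 ≤ n) (T : ℝ) (hT : 0 < T)
    (Ω : Set (Euc n)) (hΩo : IsOpen Ω) (hΩb : Bornology.IsBounded Ω) (hΩne : Ω.Nonempty)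
    (DpH : ℝ → Euc n → Euc n → Measure (Euc n × Euc n) → Euc n)
    (C₀ q lam₀ q₀ L₁ : ℝ) (hC₀ : 0 < C₀) (hq : 1 < q) (hlam₀ : lam₀ ∈ Ioo (0:ℝ) 1)
    (hq₀ : 1 ≤ q₀) (hL₁ : L₁ ∈ Ioo (0:ℝ) 1)
    -- continuity of `D_pH` on `[0,T]×cl(Ω)×ℝⁿ×𝔐_{∞,R}` (with `d*` on measures)
    (hDcont : MContV T Ω DpH)
    -- (i) contraction property
    (hLip : ∀ (s : ℝ) (x pp : Euc n) (ρ : Measure (Euc n)),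
      ρ Set.univ ≤ 1 → ρ ((closure Ω)ᶜ) = 0 →
      ∀ α₁ α₂ : Euc n → Euc n,
        ContinuousOn α₁ (closure Ω) → ContinuousOn α₂ (closure Ω) →
        (∃ C, ∀ y ∈ closure Ω, ‖α₁ y‖ ≤ C) → (∃ C, ∀ y ∈ closure Ω, ‖α₂ y‖ ≤ C) →
        ‖DpH s x pp (pushfwd ρ α₁) - DpH s x pp (pushfwd ρ α₂)‖ ≤
          L₁ * LqNormV q₀ ρ (fun y => α₁ y - α₂ y))
    -- (ii) growth bound
    (hgrowth : ∀ s ∈ Icc (0:ℝ) T, ∀ x ∈ closure Ω, ∀ (pp : Euc n)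
      (μ' : Measure (Euc n × Euc n)), μ' Set.univ ≤ 1 →
      ‖DpH s x pp μ'‖ ≤ C₀ * (1 + ‖pp‖ ^ (q - 1)) + lam₀ * LambdaQ q₀ μ')
    -- the converging sequence of data
    (tk lamk : ℕ → ℝ) (pk : ℕ → Euc n → Euc n) (mk : ℕ → Euc n → ℝ)
    (t lam : ℝ) (p : Euc n → Euc n) (m : Euc n → ℝ)
    (htk : ∀ k, tk k ∈ Icc 0 T) (ht : t ∈ Icc 0 T)
    (hlamk : ∀ k, lamk k ∈ Icc (0:ℝ) 1) (hlam : lam ∈ Icc (0:ℝ) 1)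
    (hpkc : ∀ k, ContinuousOn (pk k) (closure Ω)) (hpc : ContinuousOn p (closure Ω))
    (htt : Tendsto tk atTop (𝓝 t)) (hll : Tendsto lamk atTop (𝓝 lam))
    (hpp : TendstoUniformlyOn pk p atTop (closure Ω))
    (hmk0 : ∀ k x, 0 ≤ mk k x) (hm0 : ∀ x, 0 ≤ m x)
    (hmkint : ∀ k, IntegrableOn (mk k) Ω) (hmint : IntegrableOn m Ω)
    (hmk1 : ∀ k, (∫ x in Ω, mk k x) ≤ 1)
    (hmconv : Tendsto (fun k => ∫ x in Ω, |mk k x - m x|) atTop (𝓝 0))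
    -- the fixed points associated to the data
    (μk : ℕ → Measure (Euc n × Euc n)) (μ : Measure (Euc n × Euc n))
    (hμk : ∀ k, μk k = pushfwd (densMeas Ω (mk k))
        (fun x => -(lamk k • DpH (tk k) x (pk k x) (μk k))))
    (hμ : μ = pushfwd (densMeas Ω m) (fun x => -(lam • DpH t x (p x) μ))) :
    Tendsto (fun k => dstar (μk k) μ) atTop (𝓝 0) := by
  classical
  have hKcomp : IsCompact (closure Ω) :=
    Metric.isCompact_of_isClosed_isBounded isClosed_closure hΩb.closure
  have hKne : (closure Ω).Nonempty := hΩne.closure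
  obtain ⟨x₀, hx₀⟩ := id hKne
  have hq₀0 : (0:ℝ) < q₀ := lt_of_lt_of_le one_pos hq₀
  have h1L : 0 < 1 - L₁ := by have := hL₁.2; linarith
  have h1lam : 0 < 1 - lam₀ := by have := hlam₀.2; linarith
  -- bound for p
  obtain ⟨P0, hP0⟩ := hKcomp.exists_bound_of_continuousOn hpc
  have hPb : ∀ x ∈ closure Ω, ‖p x‖ ≤ max P0 0 := fun x hx => (hP0 x hx).trans (le_max_left _ _)
  -- ∫ m ≤ 1
  have hmint1 : (∫ x in Ω, m x) ≤ 1 := by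
    have hd : Tendsto (fun k => (∫ x in Ω, mk k x) - ∫ x in Ω, m x) atTop (𝓝 0) := by
      refine squeeze_zero_norm (fun k => ?_) hmconv
      rw [← integral_sub (hmkint k) hmint, Real.norm_eq_abs]
      exact abs_int_le _ _
    have h2 : Tendsto (fun k => ∫ x in Ω, mk k x) atTop (𝓝 (∫ x in Ω, m x)) := by
      have := hd.add_const (∫ x in Ω, m x)
      simpa using this
    exact le_of_tendsto h2 (Filter.Eventually.of_forall hmk1)
  -- limit fixed-point properties
  obtain ⟨hμmass, hμsupp, hαcont, hαbd⟩ :=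
    fp_props hΩo hC₀ hq hlam₀ hq₀ hDcont hgrowth ht hlam hpc (le_max_right P0 0) hPb
      hm0 hmint hmint1 hμ
  set Rl : ℝ := C₀ * (1 + max P0 0 ^ (q - 1)) / (1 - lam₀) with hRldef
  have hRlpos : 0 < Rl := by
    rw [hRldef]
    refine div_pos (by positivity) h1lam
  set B : Euc n → Euc n := fun x => DpH t x (p x) μ with hBdef
  set α : Euc n → Euc n := fun x => -(lam • B x) with hαdef
  have hBcont : ContinuousOn B (closure Ω) := by
    simp only [hBdef]
    exact cont_DpH hDcont ht hpc hμmass hRlpos hμsupp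
  -- χ properties
  have hχprops : ∀ k, AEMeasurable (fun x => (x, α x)) (densMeas Ω (mk k)) ∧
      pushfwd (densMeas Ω (mk k)) α Set.univ = densMeas Ω (mk k) Set.univ ∧
      pushfwd (densMeas Ω (mk k)) α {z : Euc n × Euc n | Rl < ‖z.2‖} = 0 :=
    fun k => pushfwd_props hΩo hαcont hαbd
  have hχmass : ∀ k, pushfwd (densMeas Ω (mk k)) α Set.univ ≤ 1 :=
    fun k => ((hχprops k).2.1).trans_le (densMeas_univ_le (hmk0 k) (hmkint k) (hmk1 k))
  have hχsupp : ∀ k, pushfwd (densMeas Ω (mk k)) α {z : Euc n × Euc n | Rl < ‖z.2‖} = 0 :=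
    fun k => (hχprops k).2.2
  have hFαm : AEMeasurable (fun x => (x, α x)) (densMeas Ω m) :=
    (pushfwd_props hΩo hαcont hαbd).1
  -- per-k fixed-point properties
  have hkfp : ∀ k, ContinuousOn (fun x => -(lamk k • DpH (tk k) x (pk k x) (μk k))) (closure Ω) ∧
      ∃ Ck, ∀ x ∈ closure Ω, ‖-(lamk k • DpH (tk k) x (pk k x) (μk k))‖ ≤ Ck := by
    intro k
    obtain ⟨P1, hP1⟩ := hKcomp.exists_bound_of_continuousOn (hpkc k)
    have h := fp_props hΩo hC₀ hq hlam₀ hq₀ hDcont hgrowth (htk k) (hlamk k) (hpkc k)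
      (le_max_right P1 0) (fun x hx => (hP1 x hx).trans (le_max_left _ _)) (hmk0 k)
      (hmkint k) (hmk1 k) (hμk k)
    exact ⟨h.2.2.1, _, h.2.2.2⟩
  have hakm : ∀ k, AEMeasurable
      (fun x => (x, -(lamk k • DpH (tk k) x (pk k x) (μk k)))) (densMeas Ω (mk k)) :=
    fun k => (pushfwd_props hΩo (hkfp k).1 (hkfp k).2.choose_spec).1
  -- the L¹ difference
  set η : ℕ → ℝ := fun k => ∫ x in Ω, |mk k x - m x| with hηdef
  have hη0 : ∀ k, 0 ≤ η k := fun k => integral_nonneg fun x => abs_nonneg _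
  -- key estimate for the m-difference
  have hkey : ∀ k (φ : Euc n × Euc n → ℝ), LipschitzWith 1 φ → (∀ z, |φ z| ≤ 1) →
      (∫ x, φ (x, α x) ∂densMeas Ω (mk k)) - (∫ x, φ (x, α x) ∂densMeas Ω m) ≤ η k := by
    intro k φ h1 h2
    have hψc : ContinuousOn (fun x => φ (x, α x)) (closure Ω) :=
      h1.continuous.comp_continuousOn (continuousOn_id.prodMk hαcont)
    have hψm : AEStronglyMeasurable (fun x => φ (x, α x)) (volume.restrict Ω) :=
      (hψc.mono subset_closure).aestronglyMeasurable hΩo.measurableSet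
    rw [densMeas_integral (hmk0 k) (hmkint k).aestronglyMeasurable _,
      densMeas_integral hm0 hmint.aestronglyMeasurable _]
    have hint1 : Integrable (fun x => mk k x • φ (x, α x)) (volume.restrict Ω) := by
      simp only [smul_eq_mul]
      refine ((hmkint k).abs).mono' ((hmkint k).aestronglyMeasurable.mul hψm)
        (Filter.Eventually.of_forall fun x => ?_)
      rw [Real.norm_eq_abs, abs_mul]
      exact mul_le_of_le_one_right (abs_nonneg _) (h2 _)
    have hint2 : Integrable (fun x => m x • φ (x, α x)) (volume.restrict Ω) := by
      simp only [smul_eq_mul]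
      refine (hmint.abs).mono' (hmint.aestronglyMeasurable.mul hψm)
        (Filter.Eventually.of_forall fun x => ?_)
      rw [Real.norm_eq_abs, abs_mul]
      exact mul_le_of_le_one_right (abs_nonneg _) (h2 _)
    rw [← integral_sub hint1 hint2]
    calc ∫ x in Ω, (mk k x • φ (x, α x) - m x • φ (x, α x))
        ≤ |∫ x in Ω, (mk k x • φ (x, α x) - m x • φ (x, α x))| := le_abs_self _
      _ ≤ ∫ x in Ω, |mk k x • φ (x, α x) - m x • φ (x, α x)| := abs_int_le _ _
      _ ≤ ∫ x in Ω, |mk k x - m x| := by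
          refine integral_mono (hint1.sub hint2).abs ((hmkint k).sub hmint).abs fun x => ?_
          have he : mk k x • φ (x, α x) - m x • φ (x, α x) = (mk k x - m x) * φ (x, α x) := by
            simp only [smul_eq_mul]; ring
          rw [he, abs_mul]
          exact mul_le_of_le_one_right (abs_nonneg _) (h2 _)
      _ = η k := rfl
  -- dstar bound for χ
  have hχbnd : ∀ k (φ : Euc n × Euc n → ℝ), LipschitzWith 1 φ → (∀ z, |φ z| ≤ 1) →
      (∫ z, φ z ∂pushfwd (densMeas Ω (mk k)) α) - (∫ z, φ z ∂μ) ≤ η k := by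
    intro k φ h1 h2
    have e1 : (∫ z, φ z ∂pushfwd (densMeas Ω (mk k)) α) =
        ∫ x, φ (x, α x) ∂densMeas Ω (mk k) := by
      simp only [pushfwd]
      exact integral_map (hχprops k).1 h1.continuous.aestronglyMeasurable
    have e2 : (∫ z, φ z ∂μ) = ∫ x, φ (x, α x) ∂densMeas Ω m := by
      conv_lhs => rw [hμ]
      simp only [pushfwd]
      exact integral_map hFαm h1.continuous.aestronglyMeasurable
    rw [e1, e2]
    exact hkey k φ h1 h2
  have hχconv : Tendsto (fun k => dstar (pushfwd (densMeas Ω (mk k)) α) μ) atTop (𝓝 0) :=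
    squeeze_zero (fun k => dstar_nonneg (hχbnd k)) (fun k => dstar_le (hη0 k) (hχbnd k)) hmconv
  -- E and ε
  set E : ℕ → Euc n → ℝ := fun k x =>
    ‖lamk k • DpH (tk k) x (pk k x) (pushfwd (densMeas Ω (mk k)) α) - lam • B x‖ with hEdef
  have hEcont : ∀ k, ContinuousOn (E k) (closure Ω) := by
    intro k
    simp only [hEdef]
    exact (((cont_DpH hDcont (htk k) (hpkc k) (hχmass k) hRlpos (hχsupp k)).const_smul
      (lamk k)).sub (hBcont.const_smul lam)).norm
  set ε : ℕ → ℝ := fun k => sSup (E k '' closure Ω) with hεdef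
  have hEle : ∀ k, ∀ x ∈ closure Ω, E k x ≤ ε k := fun k x hx =>
    le_csSup ((hKcomp.image_of_continuousOn (hEcont k)).bddAbove) (mem_image_of_mem _ hx)
  have hεnn : ∀ k, 0 ≤ ε k := fun k => le_trans (by simp only [hEdef]; positivity) (hEle k x₀ hx₀)
  -- ε → 0
  have hεconv : Tendsto ε atTop (𝓝 0) := by
    by_contra hcon
    rw [Metric.tendsto_atTop] at hcon
    push_neg at hcon
    obtain ⟨ε₀, hε₀, hfr⟩ := hcon
    have hfr' : ∃ᶠ k in atTop, ε₀ ≤ ε k := by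
      rw [Filter.frequently_atTop]
      intro N
      obtain ⟨k, hk1, hk2⟩ := hfr N
      exact ⟨k, hk1, by rwa [Real.dist_eq, sub_zero, abs_of_nonneg (hεnn k)] at hk2⟩
    obtain ⟨φi, hφmono, hφge⟩ := Filter.extraction_of_frequently_atTop hfr'
    have hchoice : ∀ j, ∃ x ∈ closure Ω, sSup (E (φi j) '' closure Ω) = E (φi j) x :=
      fun j => hKcomp.exists_sSup_image_eq hKne (hEcont (φi j))
    choose xx hxxK hxxE using hchoice
    obtain ⟨a, haK, ψi, hψmono, hxa⟩ := hKcomp.tendsto_subseq hxxK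
    have hσ : Tendsto (fun l => φi (ψi l)) atTop atTop := (hφmono.comp hψmono).tendsto_atTop
    have hBx : Tendsto (fun l => B (xx (ψi l))) atTop (𝓝 (B a)) :=
      (hBcont a haK).tendsto.comp (tendsto_nhdsWithin_iff.mpr ⟨hxa, .of_forall fun l => hxxK _⟩)
    have hpconv : Tendsto (fun l => pk (φi (ψi l)) (xx (ψi l))) atTop (𝓝 (p a)) := by
      have h2 : Tendsto (fun l => p (xx (ψi l))) atTop (𝓝 (p a)) :=
        (hpc a haK).tendsto.comp (tendsto_nhdsWithin_iff.mpr ⟨hxa, .of_forall fun l => hxxK _⟩)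
      rw [tendsto_iff_dist_tendsto_zero]
      have hg1 : Tendsto (fun l => dist (p (xx (ψi l))) (pk (φi (ψi l)) (xx (ψi l))))
          atTop (𝓝 0) := by
        rw [Metric.tendsto_atTop]
        intro δ hδ
        have hev := hσ.eventually (Metric.tendstoUniformlyOn_iff.mp hpp δ hδ)
        rw [eventually_atTop] at hev
        obtain ⟨N, hN⟩ := hev
        exact ⟨N, fun l hl => by
          rw [Real.dist_eq, sub_zero, abs_of_nonneg dist_nonneg]
          exact hN l hl _ (hxxK _)⟩
      have hg2 := tendsto_iff_dist_tendsto_zero.mp h2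
      refine squeeze_zero (fun l => dist_nonneg) (fun l => ?_) (by simpa using hg1.add hg2)
      calc dist (pk (φi (ψi l)) (xx (ψi l))) (p a)
          ≤ dist (pk (φi (ψi l)) (xx (ψi l))) (p (xx (ψi l))) + dist (p (xx (ψi l))) (p a) :=
            dist_triangle _ _ _
        _ = dist (p (xx (ψi l))) (pk (φi (ψi l)) (xx (ψi l))) + dist (p (xx (ψi l))) (p a) := by
            rw [dist_comm]
    have hdχ : Tendsto (fun l => dstar (pushfwd (densMeas Ω (mk (φi (ψi l)))) α) μ)
        atTop (𝓝 0) := hχconv.comp hσ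
    have hAconv : Tendsto (fun l => DpH (tk (φi (ψi l))) (xx (ψi l))
        (pk (φi (ψi l)) (xx (ψi l))) (pushfwd (densMeas Ω (mk (φi (ψi l)))) α))
        atTop (𝓝 (DpH t a (p a) μ)) :=
      hDcont Rl hRlpos (fun l => tk (φi (ψi l))) (fun l => xx (ψi l))
        (fun l => pk (φi (ψi l)) (xx (ψi l))) (fun l => pushfwd (densMeas Ω (mk (φi (ψi l)))) α)
        t a (p a) μ (fun l => htk _) ht (fun l => hxxK _) haK
        (fun l => ⟨hχmass _, hχsupp _⟩) hμmass hμsupp (htt.comp hσ) hxa hpconv hdχ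
    have hE0 : Tendsto (fun l => E (φi (ψi l)) (xx (ψi l))) atTop (𝓝 0) := by
      have h5 : Tendsto (fun l => lamk (φi (ψi l)) • DpH (tk (φi (ψi l))) (xx (ψi l))
          (pk (φi (ψi l)) (xx (ψi l))) (pushfwd (densMeas Ω (mk (φi (ψi l)))) α)
          - lam • B (xx (ψi l))) atTop (𝓝 (lam • B a - lam • B a)) := by
        refine Tendsto.sub (Tendsto.smul (hll.comp hσ) ?_) (tendsto_const_nhds.smul hBx)
        simp only [hBdef]
        exact hAconv
      rw [sub_self] at h5
      simpa only [hEdef, norm_zero] using h5.norm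
    have hcontr := hE0.eventually_lt_const hε₀
    obtain ⟨l, hl⟩ := hcontr.exists
    have hge := hφge (ψi l)
    have heq : ε (φi (ψi l)) = E (φi (ψi l)) (xx (ψi l)) := hxxE (ψi l)
    rw [heq] at hge
    linarith
  -- S and X
  have hakc : ∀ k, ContinuousOn
      (fun x => ‖-(lamk k • DpH (tk k) x (pk k x) (μk k)) - α x‖) (closure Ω) :=
    fun k => ((hkfp k).1.sub hαcont).norm
  set S : ℕ → ℝ := fun k =>
    sSup ((fun x => ‖-(lamk k • DpH (tk k) x (pk k x) (μk k)) - α x‖) '' closure Ω) with hSdef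
  have hSle : ∀ k, ∀ x ∈ closure Ω,
      ‖-(lamk k • DpH (tk k) x (pk k x) (μk k)) - α x‖ ≤ S k := fun k x hx =>
    le_csSup ((hKcomp.image_of_continuousOn (hakc k)).bddAbove) (mem_image_of_mem _ hx)
  have hSnn : ∀ k, 0 ≤ S k := fun k => (norm_nonneg _).trans (hSle k x₀ hx₀)
  set X : ℕ → ℝ := fun k => LqNormV q₀ (densMeas Ω (mk k))
    (fun y => -(lamk k • DpH (tk k) y (pk k y) (μk k)) - α y) with hXdef
  have hXnn : ∀ k, 0 ≤ X k := by
    intro k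
    simp only [hXdef, LqNormV]
    exact Real.rpow_nonneg (integral_nonneg fun y => Real.rpow_nonneg (norm_nonneg _) _) _
  have hXleS : ∀ k, X k ≤ S k := by
    intro k
    have hI : (∫ y, ‖-(lamk k • DpH (tk k) y (pk k y) (μk k)) - α y‖ ^ q₀
        ∂densMeas Ω (mk k)) ≤ S k ^ q₀ :=
      densMeas_integral_le hΩo (hmk0 k) (hmkint k) (hmk1 k)
        (Real.rpow_nonneg (hSnn k) _) (fun y => Real.rpow_nonneg (norm_nonneg _) _)
        (fun y hy => Real.rpow_le_rpow (norm_nonneg _) (hSle k y hy) hq₀0.le)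
    have h4 : X k ≤ (S k ^ q₀) ^ (1 / q₀) := by
      simp only [hXdef, LqNormV]
      exact Real.rpow_le_rpow
        (integral_nonneg fun y => Real.rpow_nonneg (norm_nonneg _) _) hI (by positivity)
    rwa [← Real.rpow_mul (hSnn k), mul_one_div_cancel (ne_of_gt hq₀0), Real.rpow_one] at h4
  -- pointwise contraction estimate
  have hpt : ∀ k, ∀ x ∈ closure Ω,
      ‖-(lamk k • DpH (tk k) x (pk k x) (μk k)) - α x‖ ≤ L₁ * X k + E k x := by
    intro k x hx
    have hlip := hLip (tk k) x (pk k x) (densMeas Ω (mk k))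
      (densMeas_univ_le (hmk0 k) (hmkint k) (hmk1 k)) densMeas_compl
      (fun y => -(lamk k • DpH (tk k) y (pk k y) (μk k))) α (hkfp k).1 hαcont
      (hkfp k).2 ⟨Rl, hαbd⟩
    rw [← hμk k] at hlip
    simp only [hXdef, hEdef]
    have hsplit : -(lamk k • DpH (tk k) x (pk k x) (μk k)) - α x =
        -(lamk k • (DpH (tk k) x (pk k x) (μk k)
            - DpH (tk k) x (pk k x) (pushfwd (densMeas Ω (mk k)) α)))
        - (lamk k • DpH (tk k) x (pk k x) (pushfwd (densMeas Ω (mk k)) α) - lam • B x) := by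
      have hαx : α x = -(lam • B x) := by simp only [hαdef]
      rw [hαx]
      simp only [smul_sub]
      abel
    rw [hsplit]
    refine (norm_sub_le _ _).trans ?_
    rw [norm_neg]
    refine add_le_add ?_ le_rfl
    rw [norm_smul, Real.norm_of_nonneg (hlamk k).1]
    calc lamk k * ‖DpH (tk k) x (pk k x) (μk k)
          - DpH (tk k) x (pk k x) (pushfwd (densMeas Ω (mk k)) α)‖
        ≤ 1 * ‖DpH (tk k) x (pk k x) (μk k)
          - DpH (tk k) x (pk k x) (pushfwd (densMeas Ω (mk k)) α)‖ :=
          mul_le_mul_of_nonneg_right (hlamk k).2 (norm_nonneg _)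
      _ = ‖DpH (tk k) x (pk k x) (μk k)
          - DpH (tk k) x (pk k x) (pushfwd (densMeas Ω (mk k)) α)‖ := one_mul _
      _ ≤ _ := hlip
  have hSfin : ∀ k, S k ≤ ε k / (1 - L₁) := by
    intro k
    have h1 : S k ≤ L₁ * X k + ε k := by
      rw [hSdef]
      refine Real.sSup_le ?_ (add_nonneg (mul_nonneg hL₁.1.le (hXnn k)) (hεnn k))
      rintro r ⟨x, hx, rfl⟩
      exact (hpt k x hx).trans (add_le_add_right (hEle k x hx) _)
    have h2 : S k ≤ L₁ * S k + ε k :=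
      h1.trans (add_le_add_left (mul_le_mul_of_nonneg_left (hXleS k) hL₁.1.le) _)
    rw [le_div_iff₀ h1L]
    nlinarith [h2]
  -- dstar bound for μk
  have hbnd : ∀ k (φ : Euc n × Euc n → ℝ), LipschitzWith 1 φ → (∀ z, |φ z| ≤ 1) →
      (∫ z, φ z ∂μk k) - (∫ z, φ z ∂μ) ≤ S k + η k := by
    intro k φ h1 h2
    have e1 : (∫ z, φ z ∂μk k) =
        ∫ x, φ (x, -(lamk k • DpH (tk k) x (pk k x) (μk k))) ∂densMeas Ω (mk k) := by
      conv_lhs => rw [hμk k]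
      simp only [pushfwd]
      exact integral_map (hakm k) h1.continuous.aestronglyMeasurable
    have e2 : (∫ z, φ z ∂μ) = ∫ x, φ (x, α x) ∂densMeas Ω m := by
      conv_lhs => rw [hμ]
      simp only [pushfwd]
      exact integral_map hFαm h1.continuous.aestronglyMeasurable
    rw [e1, e2]
    have hsub : (∫ x, φ (x, -(lamk k • DpH (tk k) x (pk k x) (μk k))) ∂densMeas Ω (mk k))
        - (∫ x, φ (x, α x) ∂densMeas Ω m) =
        ((∫ x, φ (x, -(lamk k • DpH (tk k) x (pk k x) (μk k))) ∂densMeas Ω (mk k))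
          - (∫ x, φ (x, α x) ∂densMeas Ω (mk k)))
        + ((∫ x, φ (x, α x) ∂densMeas Ω (mk k)) - (∫ x, φ (x, α x) ∂densMeas Ω m)) := by
      ring
    rw [hsub]
    refine add_le_add ?_ (hkey k φ h1 h2)
    have hi1 : Integrable (fun x => φ (x, -(lamk k • DpH (tk k) x (pk k x) (μk k))))
        (densMeas Ω (mk k)) := by
      refine integrable_densMeas hΩo (hmk0 k) (hmkint k) (hmk1 k)
        (aesm_densMeas hΩo (h1.continuous.comp_continuousOn
          (continuousOn_id.prodMk (hkfp k).1))) (c := 1) fun x hx => ?_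
      rw [Real.norm_eq_abs]; exact h2 _
    have hi2 : Integrable (fun x => φ (x, α x)) (densMeas Ω (mk k)) := by
      refine integrable_densMeas hΩo (hmk0 k) (hmkint k) (hmk1 k)
        (aesm_densMeas hΩo (h1.continuous.comp_continuousOn
          (continuousOn_id.prodMk hαcont))) (c := 1) fun x hx => ?_
      rw [Real.norm_eq_abs]; exact h2 _
    rw [← integral_sub hi1 hi2]
    have hinorm : Integrable (fun x => ‖-(lamk k • DpH (tk k) x (pk k x) (μk k)) - α x‖)
        (densMeas Ω (mk k)) := by
      refine integrable_densMeas hΩo (hmk0 k) (hmkint k) (hmk1 k)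
        (aesm_densMeas hΩo (hakc k)) (c := S k) fun x hx => ?_
      rw [norm_norm]; exact hSle k x hx
    calc ∫ x, (φ (x, -(lamk k • DpH (tk k) x (pk k x) (μk k))) - φ (x, α x))
          ∂densMeas Ω (mk k)
        ≤ ∫ x, ‖-(lamk k • DpH (tk k) x (pk k x) (μk k)) - α x‖ ∂densMeas Ω (mk k) := by
          refine integral_mono (hi1.sub hi2) hinorm fun x => ?_
          have hlip := h1.dist_le_mul (x, -(lamk k • DpH (tk k) x (pk k x) (μk k))) (x, α x)
          rw [NNReal.coe_one, one_mul] at hlip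
          have hd : dist (x, -(lamk k • DpH (tk k) x (pk k x) (μk k))) (x, α x)
              = ‖-(lamk k • DpH (tk k) x (pk k x) (μk k)) - α x‖ := by
            rw [Prod.dist_eq, dist_self, dist_eq_norm]
            exact max_eq_right (norm_nonneg _)
          calc φ (x, -(lamk k • DpH (tk k) x (pk k x) (μk k))) - φ (x, α x)
              ≤ |φ (x, -(lamk k • DpH (tk k) x (pk k x) (μk k))) - φ (x, α x)| := le_abs_self _
            _ = dist (φ (x, -(lamk k • DpH (tk k) x (pk k x) (μk k)))) (φ (x, α x)) :=
                (Real.dist_eq _ _).symm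
            _ ≤ _ := hlip.trans_eq hd
      _ ≤ S k := densMeas_integral_le hΩo (hmk0 k) (hmkint k) (hmk1 k) (hSnn k)
          (fun x => norm_nonneg _) (hSle k)
  -- conclusion
  have hfin : Tendsto (fun k => ε k / (1 - L₁) + η k) atTop (𝓝 0) := by
    have := (hεconv.div_const (1 - L₁)).add hmconv
    simpa using this
  refine squeeze_zero (fun k => dstar_nonneg (hbnd k)) (fun k => ?_) hfin
  exact (dstar_le (add_nonneg (hSnn k) (hη0 k)) (hbnd k)).trans
    (add_le_add_left (hSfin k) _)
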